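/- Let R₀ be a commutative ring, m ≥ 1, and let w : Fin m → ℕ be weights with w(i) > 0 for every i. Equip the polynomial ring A := R₀[X₁,…,X_m] (multivariate polynomials) with the weighted grading in which X_j has weight w(j). Let t₁,…,t_m ∈ A be such that each t_i is weighted homogeneous of weighted degree w(i). If the determinant of the Jacobian matrix (∂t_i/∂X_j)_{1≤i,j≤m} is a unit of A, then the R₀-algebra endomorphism of A determined by X_i ↦ t_i is bijective; in particular R₀[t₁,…,t_m] = R₀[X₁,…,X_m], i.e. t₁,…,t_m generate A as an R₀-algebra. -/

import Mathlib

noncomputable section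

namespace WHJBaux

open MvPolynomial

variable {σ : Type*} [DecidableEq σ] {R : Type*} [CommRing R]

lemma degree_add' (d e : σ →₀ ℕ) :
    (d + e).degree = d.degree + e.degree := by
  simp [Finsupp.degree_eq_weight_one, map_add]

lemma weight_single (w : σ → ℕ) (a : σ) (b : ℕ) :
    Finsupp.weight w (Finsupp.single a b) = b * w a := by
  rw [Finsupp.weight_apply, Finsupp.sum_single_index] <;> simp

lemma degree_single' (a : σ) (b : ℕ) : (Finsupp.single a b).degree = b := by
  simp [Finsupp.degree_eq_weight_one, weight_single]

lemma degree_le_one_cases (d : σ →₀ ℕ) (h : Finsupp.degree d ≤ 1) :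
    d = 0 ∨ ∃ k, d = Finsupp.single k 1 := by
  classical
  by_cases h0 : d = 0
  · exact Or.inl h0
  right
  obtain ⟨k, hk⟩ := Finsupp.support_nonempty_iff.mpr h0
  refine ⟨k, ?_⟩
  have hk1 : d k = 1 := le_antisymm (le_trans (Finsupp.le_degree k d) h)
    (Nat.one_le_iff_ne_zero.mpr (Finsupp.mem_support_iff.mp hk))
  ext x
  rcases eq_or_ne x k with rfl | hx
  · simpa [Finsupp.single_apply] using hk1
  · rw [Finsupp.single_apply, if_neg (Ne.symm hx)]
    by_contra hdx
    have hxk : x ∈ d.support := Finsupp.mem_support_iff.mpr hdx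
    have hsub : ({k, x} : Finset σ) ⊆ d.support := by
      intro y hy
      simp only [Finset.mem_insert, Finset.mem_singleton] at hy
      rcases hy with rfl | rfl
      exacts [hk, hxk]
    have h1 : d k + d x ≤ ∑ y ∈ d.support, d y := by
      have := Finset.sum_le_sum_of_subset (f := fun y => d y) hsub
      rwa [Finset.sum_pair (Ne.symm hx)] at this
    have h2 : Finsupp.degree d = ∑ y ∈ d.support, d y := rfl
    have hdx1 : 1 ≤ d x := Nat.one_le_iff_ne_zero.mpr hdx
    omega

lemma constantCoeff_pderiv (j : σ) (p : MvPolynomial σ R) :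
    constantCoeff (pderiv j p) = p.coeff (Finsupp.single j 1) := by
  induction p using MvPolynomial.induction_on' with
  | add p q hp hq => simp [map_add, coeff_add, hp, hq]
  | monomial u a =>
    rw [pderiv_monomial, constantCoeff_monomial, coeff_monomial]
    by_cases h : u = Finsupp.single j 1
    · subst h; simp
    · rw [if_neg h]
      by_cases h0 : u - Finsupp.single j 1 = 0
      · rw [if_pos h0]
        have hle : u ≤ Finsupp.single j 1 := tsub_eq_zero_iff_le.mp h0
        by_cases hj : u j = 0
        · simp [hj]
        · exfalso
          apply h
          have h1 : u j = 1 :=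
            le_antisymm (by simpa using hle j) (Nat.one_le_iff_ne_zero.mpr hj)
          ext x
          rcases eq_or_ne x j with rfl | hx
          · simpa [Finsupp.single_apply] using h1
          · have hx0 : u x ≤ 0 := by
              simpa [Finsupp.single_apply, Ne.symm hx] using hle x
            simp [Finsupp.single_apply, Ne.symm hx, Nat.le_zero.mp hx0]
      · rw [if_neg h0]

/-- `f`'s monomials all have the weight of `e` and degree at least that of `e`. -/
def Ok (w : σ → ℕ) (e : σ →₀ ℕ) (f : MvPolynomial σ R) : Prop :=
  ∀ d ∈ f.support, Finsupp.weight w d = Finsupp.weight w e ∧ e.degree ≤ d.degree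

/-- `f`'s monomials all have the weight of `e` and degree strictly more than that of `e`. -/
def Gd (w : σ → ℕ) (e : σ →₀ ℕ) (f : MvPolynomial σ R) : Prop :=
  ∀ d ∈ f.support, Finsupp.weight w d = Finsupp.weight w e ∧ e.degree < d.degree

variable {w : σ → ℕ}

lemma mem_support_monomial' {e d : σ →₀ ℕ} {c : R}
    (hd : d ∈ (monomial e c).support) : e = d := by
  have h := MvPolynomial.mem_support_iff.mp hd
  rw [coeff_monomial] at h
  by_contra hne
  exact h (if_neg hne)

lemma ok_monomial (w : σ → ℕ) (e : σ →₀ ℕ) (c : R) : Ok w e (monomial e c) := by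
  intro d hd
  rw [← mem_support_monomial' hd]
  exact ⟨rfl, le_rfl⟩

lemma Ok.mul {e e' : σ →₀ ℕ} {f f' : MvPolynomial σ R}
    (h : Ok w e f) (h' : Ok w e' f') : Ok w (e + e') (f * f') := by
  intro d hd
  obtain ⟨a, ha, b, hb, rfl⟩ := Finset.mem_add.mp (support_mul f f' hd)
  obtain ⟨w1, d1⟩ := h a ha
  obtain ⟨w2, d2⟩ := h' b hb
  refine ⟨by rw [map_add, map_add, w1, w2], ?_⟩
  rw [degree_add', degree_add']
  omega

lemma Ok.mul_gd {e e' : σ →₀ ℕ} {f f' : MvPolynomial σ R}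
    (h : Ok w e f) (h' : Gd w e' f') : Gd w (e + e') (f * f') := by
  intro d hd
  obtain ⟨a, ha, b, hb, rfl⟩ := Finset.mem_add.mp (support_mul f f' hd)
  obtain ⟨w1, d1⟩ := h a ha
  obtain ⟨w2, d2⟩ := h' b hb
  refine ⟨by rw [map_add, map_add, w1, w2], ?_⟩
  rw [degree_add', degree_add']
  omega

lemma Gd.mul_ok {e e' : σ →₀ ℕ} {f f' : MvPolynomial σ R}
    (h : Gd w e f) (h' : Ok w e' f') : Gd w (e + e') (f * f') := by
  intro d hd
  obtain ⟨a, ha, b, hb, rfl⟩ := Finset.mem_add.mp (support_mul f f' hd)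
  obtain ⟨w1, d1⟩ := h a ha
  obtain ⟨w2, d2⟩ := h' b hb
  refine ⟨by rw [map_add, map_add, w1, w2], ?_⟩
  rw [degree_add', degree_add']
  omega

lemma Gd.add {e : σ →₀ ℕ} {f g : MvPolynomial σ R}
    (h : Gd w e f) (h' : Gd w e g) : Gd w e (f + g) := by
  intro d hd
  rcases Finset.mem_union.mp (support_add hd) with h1 | h1
  exacts [h d h1, h' d h1]

end WHJBaux

end

/-- If `t₁,…,t_m` are weighted homogeneous polynomials of the same weighted degrees
`w(1),…,w(m)` as the variables `X₁,…,X_m` (all weights positive) and the Jacobian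
determinant `det(∂t_i/∂X_j)` is a unit, then the endomorphism `X_i ↦ t_i` of
`R₀[X₁,…,X_m]` is bijective; in particular `t₁,…,t_m` generate `R₀[X₁,…,X_m]`
as an `R₀`-algebra. -/
theorem weightedHomogeneous_jacobianUnit_bijective
    (R₀ : Type*) [CommRing R₀] (m : ℕ) (hm : 1 ≤ m)
    (w : Fin m → ℕ) (hw : ∀ i, 0 < w i)
    (t : Fin m → MvPolynomial (Fin m) R₀)
    (ht : ∀ i, (t i).IsWeightedHomogeneous w (w i))
    (hJ : IsUnit (Matrix.det (Matrix.of fun i j => MvPolynomial.pderiv j (t i)))) :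
    Function.Bijective
      (⇑(MvPolynomial.aeval t :
          MvPolynomial (Fin m) R₀ →ₐ[R₀] MvPolynomial (Fin m) R₀)) ∧
    Algebra.adjoin R₀ (Set.range t) = ⊤ := by
  classical
  open MvPolynomial WHJBaux in
  -- the linear-part matrix
  set L : Matrix (Fin m) (Fin m) R₀ :=
    Matrix.of (fun i j => (t i).coeff (Finsupp.single j 1)) with hLdef
  -- its determinant is a unit
  have hdetL : IsUnit L.det := by
    have hmap : (constantCoeff : MvPolynomial (Fin m) R₀ →+* R₀).mapMatrix
        (Matrix.of fun i j => MvPolynomial.pderiv j (t i)) = L := by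
      ext i j
      simp only [RingHom.mapMatrix_apply, Matrix.map_apply, Matrix.of_apply, hLdef]
      exact constantCoeff_pderiv j (t i)
    have h1 := hJ.map (constantCoeff : MvPolynomial (Fin m) R₀ →+* R₀)
    rwa [RingHom.map_det, hmap] at h1
  -- L is graded
  have hL0 : ∀ i j, w i ≠ w j → L i j = 0 := by
    intro i j hne
    by_contra hc
    have := ht i hc
    rw [weight_single, one_mul] at this
    exact hne this.symm
  -- two-sided inverse
  obtain ⟨u, hu⟩ := (Matrix.isUnit_iff_isUnit_det L).mpr hdetL
  set K : Matrix (Fin m) (Fin m) R₀ := ↑u⁻¹ with hKdef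
  have hKL : K * L = 1 := by rw [hKdef, ← hu]; exact u.inv_mul
  have hLK : L * K = 1 := by rw [hKdef, ← hu]; exact u.mul_inv
  -- graded two-sided inverse
  set K' : Matrix (Fin m) (Fin m) R₀ :=
    Matrix.of (fun i j => if w i = w j then K i j else 0) with hK'def
  have hK'L : K' * L = 1 := by
    ext i k
    rw [Matrix.mul_apply]
    by_cases hik : w i = w k
    · rw [show (1 : Matrix (Fin m) (Fin m) R₀) i k = (K * L) i k from by rw [hKL],
        Matrix.mul_apply]
      apply Finset.sum_congr rfl
      intro j _
      by_cases hij : w i = w j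
      · simp [hK'def, hij]
      · have hLjk : L j k = 0 := hL0 j k (fun h => hij (hik.trans h.symm))
        simp [hK'def, hij, hLjk]
    · have hik' : i ≠ k := fun h => hik (by rw [h])
      rw [Matrix.one_apply_ne hik']
      apply Finset.sum_eq_zero
      intro j _
      by_cases hij : w i = w j
      · have : L j k = 0 := hL0 j k (fun h => hik (hij.trans h))
        simp [this]
      · simp [hK'def, hij]
  have hLK' : L * K' = 1 := by
    ext i k
    rw [Matrix.mul_apply]
    by_cases hik : w i = w k
    · rw [show (1 : Matrix (Fin m) (Fin m) R₀) i k = (L * K) i k from by rw [hLK],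
        Matrix.mul_apply]
      apply Finset.sum_congr rfl
      intro j _
      by_cases hjk : w j = w k
      · simp [hK'def, hjk]
      · have hLij : L i j = 0 := hL0 i j (fun h => hjk (h.symm.trans hik))
        simp [hK'def, hjk, hLij]
    · have hik' : i ≠ k := fun h => hik (by rw [h])
      rw [Matrix.one_apply_ne hik']
      apply Finset.sum_eq_zero
      intro j _
      by_cases hjk : w j = w k
      · have : L i j = 0 := hL0 i j (fun h => hik (h.trans hjk))
        simp [this]
      · simp [hK'def, hjk]
  -- the normalized system s
  set s : Fin m → MvPolynomial (Fin m) R₀ :=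
    fun i => ∑ j, C (K' i j) * t j with hsdef
  -- s is weighted homogeneous of the same degrees
  have hs_hom : ∀ i, (s i).IsWeightedHomogeneous w (w i) := by
    intro i
    have hmem : s i ∈ weightedHomogeneousSubmodule R₀ w (w i) := by
      rw [hsdef]
      apply Submodule.sum_mem
      intro j _
      by_cases hij : w i = w j
      · rw [hij]
        have h1 : t j ∈ weightedHomogeneousSubmodule R₀ w (w j) :=
          (mem_weightedHomogeneousSubmodule _ _ _ _).mpr (ht j)
        have h2 := Submodule.smul_mem (weightedHomogeneousSubmodule R₀ w (w j)) (K' i j) h1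
        rwa [smul_eq_C_mul] at h2
      · have hz : K' i j = 0 := by simp [hK'def, hij]
        rw [hz]
        simp
    exact (mem_weightedHomogeneousSubmodule _ _ _ _).mp hmem
  -- linear coefficients of s
  have hs_lin : ∀ i k, (s i).coeff (Finsupp.single k 1)
      = (1 : Matrix (Fin m) (Fin m) R₀) i k := by
    intro i k
    rw [← hK'L, Matrix.mul_apply, hsdef]
    rw [coeff_sum]
    apply Finset.sum_congr rfl
    intro j _
    rw [coeff_C_mul]
    rfl
  -- constant coefficient of s
  have hs0 : ∀ i, (s i).coeff 0 = 0 := by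
    intro i
    by_contra hc
    have h1 := hs_hom i hc
    rw [map_zero] at h1
    exact (Nat.ne_of_lt (hw i)) h1
  -- the higher-order part of s
  have hr : ∀ i, ∀ d ∈ (s i - X i).support,
      Finsupp.weight w d = w i ∧ 2 ≤ Finsupp.degree d := by
    intro i d hd
    have hco : (s i).coeff d - (X i : MvPolynomial (Fin m) R₀).coeff d ≠ 0 := by
      simpa [coeff_sub] using MvPolynomial.mem_support_iff.mp hd
    have hA : (s i).coeff d ≠ 0 := by
      intro h0
      have hX : (X i : MvPolynomial (Fin m) R₀).coeff d ≠ 0 := by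
        intro hx; exact hco (by rw [h0, hx, sub_zero])
      have hdx : Finsupp.single i 1 = d := by
        by_contra hne
        exact hX (by rw [coeff_X', if_neg hne])
      have h1 : (1 : R₀) = 0 := by
        have h2 := hs_lin i i
        rw [hdx, h0, Matrix.one_apply_eq] at h2
        exact h2.symm
      exact hX (by rw [← hdx, coeff_X, h1]; simp)
    refine ⟨hs_hom i hA, ?_⟩
    by_contra hdeg
    have hle1 : Finsupp.degree d ≤ 1 := by omega
    rcases degree_le_one_cases d hle1 with rfl | ⟨k, rfl⟩
    · apply hco
      rw [hs0 i, coeff_X', if_neg (by simp), sub_zero]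
    · apply hco
      rw [hs_lin i k, coeff_X']
      rcases eq_or_ne i k with rfl | hik
      · rw [Matrix.one_apply_eq, if_pos rfl, sub_self]
      · rw [Matrix.one_apply_ne hik, if_neg
          (fun h => hik (Finsupp.single_left_injective one_ne_zero h)), sub_zero]
  -- basic Ok/Gd facts
  have hgdR : ∀ a, Gd w (Finsupp.single a 1) (s a - X a) := by
    intro a d hd
    obtain ⟨h1, h2⟩ := hr a d hd
    refine ⟨by rw [h1, weight_single, one_mul], ?_⟩
    rw [degree_single']
    omega
  have hokS : ∀ a, Ok w (Finsupp.single a 1) (s a) := by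
    intro a d hd
    have : d ∈ ((X a : MvPolynomial (Fin m) R₀) + (s a - X a)).support := by
      rwa [add_sub_cancel]
    rcases Finset.mem_union.mp (support_add this) with h1 | h1
    · have hx : (X a : MvPolynomial (Fin m) R₀).coeff d ≠ 0 :=
        MvPolynomial.mem_support_iff.mp h1
      have hdx : Finsupp.single a 1 = d := by
        by_contra hne
        exact hx (by rw [coeff_X', if_neg hne])
      rw [← hdx]
      exact ⟨rfl, le_rfl⟩
    · obtain ⟨h2, h3⟩ := hgdR a d h1
      exact ⟨h2, le_of_lt h3⟩
  have hokXpow : ∀ (a : Fin m) (b : ℕ),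
      Ok w (Finsupp.single a b) ((X a : MvPolynomial (Fin m) R₀) ^ b) := by
    intro a b
    rw [X_pow_eq_monomial]
    exact ok_monomial w _ _
  have hokPow : ∀ (a : Fin m) (b : ℕ), Ok w (Finsupp.single a b) (s a ^ b) := by
    intro a b
    induction b with
    | zero =>
      rw [pow_zero, Finsupp.single_zero]
      simpa using ok_monomial w (0 : Fin m →₀ ℕ) (1 : R₀)
    | succ b ih =>
      rw [pow_succ, Finsupp.single_add]
      exact ih.mul (hokS a)
  have hgdPow : ∀ (a : Fin m) (b : ℕ),
      Gd w (Finsupp.single a b) (s a ^ b - (X a : MvPolynomial (Fin m) R₀) ^ b) := by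
    intro a b
    induction b with
    | zero =>
      intro d hd
      rw [pow_zero, pow_zero, sub_self] at hd
      simp at hd
    | succ b ih =>
      have hident : s a ^ (b + 1) - (X a : MvPolynomial (Fin m) R₀) ^ (b + 1)
          = (s a ^ b - X a ^ b) * s a + X a ^ b * (s a - X a) := by ring
      rw [hident, Finsupp.single_add]
      exact (ih.mul_ok (hokS a)).add ((hokXpow a b).mul_gd (hgdR a))
  -- aeval s on monomials
  have haevm : ∀ (a : Fin m) (b : ℕ) (f : Fin m →₀ ℕ),
      (aeval s) (monomial (Finsupp.single a b + f) (1 : R₀))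
        = s a ^ b * (aeval s) (monomial f (1 : R₀)) := by
    intro a b f
    have h1 : (monomial (Finsupp.single a b + f) (1 : R₀))
        = X a ^ b * monomial f 1 := by
      rw [X_pow_eq_monomial, monomial_mul, one_mul]
    rw [h1, map_mul, map_pow, aeval_X]
  have hone : (aeval s) (monomial (0 : Fin m →₀ ℕ) (1 : R₀)) = monomial 0 1 := by
    simp
  have hok_aeval : ∀ e : Fin m →₀ ℕ, Ok w e ((aeval s) (monomial e (1 : R₀))) := by
    intro e
    induction e using Finsupp.induction with
    | zero =>
      rw [hone]
      exact ok_monomial w _ _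
    | single_add a b f ha hb ih =>
      rw [haevm]
      exact (hokPow a b).mul ih
  have hkey : ∀ e : Fin m →₀ ℕ,
      Gd w e ((aeval s) (monomial e (1 : R₀)) - monomial e 1) := by
    intro e
    induction e using Finsupp.induction with
    | zero =>
      intro d hd
      rw [hone, sub_self] at hd
      simp at hd
    | single_add a b f ha hb ih =>
      have h1 : (monomial (Finsupp.single a b + f) (1 : R₀))
          = X a ^ b * monomial f 1 := by
        rw [X_pow_eq_monomial, monomial_mul, one_mul]
      have hident : s a ^ b * (aeval s) (monomial f (1 : R₀))
            - monomial (Finsupp.single a b + f) 1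
          = (s a ^ b - X a ^ b) * (aeval s) (monomial f (1 : R₀))
            + X a ^ b * ((aeval s) (monomial f (1 : R₀)) - monomial f 1) := by
        rw [h1]; ring
      rw [haevm, hident]
      exact ((hgdPow a b).mul_ok (hok_aeval f)).add ((hokXpow a b).mul_gd ih)
  -- the perturbation N
  set F : MvPolynomial (Fin m) R₀ →ₐ[R₀] MvPolynomial (Fin m) R₀ := aeval s with hFdef
  set N : MvPolynomial (Fin m) R₀ →ₗ[R₀] MvPolynomial (Fin m) R₀ :=
    F.toLinearMap - LinearMap.id with hNdef
  have hNapply : ∀ p, N p = F p - p := by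
    intro p
    rw [hNdef]
    simp
  have hNmono : ∀ (e : Fin m →₀ ℕ) (c : R₀), ∀ d ∈ (N (monomial e c)).support,
      Finsupp.weight w d = Finsupp.weight w e ∧ e.degree < d.degree := by
    intro e c d hd
    have h1 : (monomial e c : MvPolynomial (Fin m) R₀) = c • monomial e 1 := by
      rw [smul_monomial, smul_eq_mul, mul_one]
    have h2 : N (monomial e c) = c • (F (monomial e 1) - monomial e 1) := by
      rw [h1, map_smul, hNapply, smul_sub]
    rw [h2] at hd
    exact hkey e d (support_smul hd)
  -- degree is bounded by weight
  have hDw : ∀ d : Fin m →₀ ℕ, Finsupp.degree d ≤ Finsupp.weight w d := by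
    intro d
    rw [Finsupp.weight_apply, Finsupp.sum]
    apply Finset.sum_le_sum
    intro i _
    rw [smul_eq_mul]
    exact Nat.le_mul_of_pos_right _ (hw i)
  -- the decreasing measure
  have hstep : ∀ (k : ℕ) (f : MvPolynomial (Fin m) R₀),
      (∀ d ∈ f.support, Finsupp.weight w d - Finsupp.degree d < k + 1) →
      ∀ d ∈ (N f).support, Finsupp.weight w d - Finsupp.degree d < k := by
    intro k f hf d hd
    have hrepr : N f = ∑ e ∈ f.support, N (monomial e (f.coeff e)) := by
      rw [← map_sum, support_sum_monomial_coeff]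
    rw [hrepr] at hd
    obtain ⟨e, he, hde⟩ := Finset.mem_biUnion.mp (support_sum hd)
    obtain ⟨hwd, hdeg⟩ := hNmono e (f.coeff e) d hde
    have h1 : Finsupp.degree d ≤ Finsupp.weight w d := hDw d
    have h2 : Finsupp.weight w e - Finsupp.degree e < k + 1 := hf e he
    rw [hwd] at h1 ⊢
    omega
  have hzero : ∀ f : MvPolynomial (Fin m) R₀,
      (∀ d ∈ f.support, Finsupp.weight w d - Finsupp.degree d < 0) → f = 0 := by
    intro f hf
    by_contra h
    obtain ⟨d, hd⟩ := Finset.nonempty_of_ne_empty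
      (fun h0 => h (MvPolynomial.support_eq_empty.mp h0))
    exact Nat.not_lt_zero _ (hf d hd)
  have hinj : ∀ (k : ℕ) (f : MvPolynomial (Fin m) R₀),
      (∀ d ∈ f.support, Finsupp.weight w d - Finsupp.degree d < k) →
      f + N f = 0 → f = 0 := by
    intro k
    induction k with
    | zero => exact fun f hf _ => hzero f hf
    | succ k ih =>
      intro f hf heq
      have hfe : f = -(N f) := eq_neg_of_add_eq_zero_left heq
      refine ih f ?_ heq
      intro d hd
      have hd' : d ∈ (N f).support := by
        rw [hfe] at hd
        rwa [MvPolynomial.support_neg] at hd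
      exact hstep k f hf d hd'
  have hsurj : ∀ (k : ℕ) (g : MvPolynomial (Fin m) R₀),
      (∀ d ∈ g.support, Finsupp.weight w d - Finsupp.degree d < k) →
      ∃ f, f + N f = g := by
    intro k
    induction k with
    | zero =>
      intro g hg
      exact ⟨0, by rw [map_zero, add_zero, hzero g hg]⟩
    | succ k ih =>
      intro g hg
      obtain ⟨f', hf'⟩ := ih (N g) (hstep k g hg)
      refine ⟨g - f', ?_⟩
      rw [map_sub]
      rw [← hf']
      ring
  -- F is bijective
  have hFbij : Function.Bijective ⇑F := by
    constructor
    · intro f g hfg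
      have h0 : (f - g) + N (f - g) = 0 := by
        rw [hNapply, map_sub]
        rw [show F f = F g from hfg]
        ring
      have h1 := hinj ((f - g).support.sup
          (fun d => Finsupp.weight w d - Finsupp.degree d) + 1) (f - g)
        (fun d hd => Nat.lt_succ_of_le (Finset.le_sup (f := fun d => Finsupp.weight w d - Finsupp.degree d) hd)) h0
      exact sub_eq_zero.mp h1
    · intro g
      obtain ⟨f, hf⟩ := hsurj (g.support.sup
          (fun d => Finsupp.weight w d - Finsupp.degree d) + 1) g
        (fun d hd => Nat.lt_succ_of_le (Finset.le_sup (f := fun d => Finsupp.weight w d - Finsupp.degree d) hd))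
      refine ⟨f, ?_⟩
      have := hNapply f
      rw [← hf]
      rw [hNapply]
      ring
  -- generic matrix computation
  have hcomp : ∀ (P Q : Matrix (Fin m) (Fin m) R₀)
      (v : Fin m → MvPolynomial (Fin m) R₀), P * Q = 1 →
      ∀ i, (∑ j, C (P i j) * (∑ k, C (Q j k) * v k)) = v i := by
    intro P Q v hPQ i
    calc ∑ j, C (P i j) * (∑ k, C (Q j k) * v k)
        = ∑ j, ∑ k, C (P i j) * (C (Q j k) * v k) := by
          simp_rw [Finset.mul_sum]
      _ = ∑ k, ∑ j, C (P i j * Q j k) * v k := by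
          rw [Finset.sum_comm]
          simp_rw [C_mul, mul_assoc]
      _ = ∑ k, C ((P * Q) i k) * v k := by
          simp_rw [Matrix.mul_apply, map_sum, Finset.sum_mul]
      _ = v i := by
          rw [hPQ]
          simp only [Matrix.one_apply, apply_ite C, C_1, C_0, ite_mul, one_mul, zero_mul]
          rw [Finset.sum_ite_eq]
          simp
  -- the linear changes of coordinates
  set lin : Fin m → MvPolynomial (Fin m) R₀ := fun i => ∑ j, C (L i j) * X j with hlindef
  set lin' : Fin m → MvPolynomial (Fin m) R₀ := fun i => ∑ j, C (K' i j) * X j with hlin'def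
  have haev_lin : ∀ (P : Matrix (Fin m) (Fin m) R₀) (v : Fin m → MvPolynomial (Fin m) R₀) i,
      (aeval v) (∑ j, C (P i j) * X j) = ∑ j, C (P i j) * v j := by
    intro P v i
    rw [map_sum]
    simp [algebraMap_eq]
  have hψ1 : ∀ z : MvPolynomial (Fin m) R₀, (aeval lin') ((aeval lin) z) = z := by
    intro z
    have hc : (aeval lin' : MvPolynomial (Fin m) R₀ →ₐ[R₀] _).comp (aeval lin)
        = AlgHom.id R₀ _ := by
      apply MvPolynomial.algHom_ext
      intro i
      rw [AlgHom.comp_apply, AlgHom.id_apply, aeval_X, hlindef, haev_lin, hlin'def]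
      exact hcomp L K' X hLK' i
    have := DFunLike.congr_fun hc z
    simpa using this
  have hψ2 : ∀ z : MvPolynomial (Fin m) R₀, (aeval lin) ((aeval lin') z) = z := by
    intro z
    have hc : (aeval lin : MvPolynomial (Fin m) R₀ →ₐ[R₀] _).comp (aeval lin')
        = AlgHom.id R₀ _ := by
      apply MvPolynomial.algHom_ext
      intro i
      rw [AlgHom.comp_apply, AlgHom.id_apply, aeval_X, hlin'def, haev_lin, hlindef]
      exact hcomp K' L X hK'L i
    have := DFunLike.congr_fun hc z
    simpa using this
  have hψbij : Function.Bijective ⇑(aeval lin :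
      MvPolynomial (Fin m) R₀ →ₐ[R₀] MvPolynomial (Fin m) R₀) := by
    constructor
    · intro x y hxy
      rw [← hψ1 x, ← hψ1 y, hxy]
    · intro y
      exact ⟨(aeval lin') y, hψ2 y⟩
  -- aeval t is the composition
  have htcomp : (aeval t : MvPolynomial (Fin m) R₀ →ₐ[R₀] MvPolynomial (Fin m) R₀)
      = F.comp (aeval lin) := by
    apply MvPolynomial.algHom_ext
    intro i
    rw [AlgHom.comp_apply, aeval_X, aeval_X, hlindef, hFdef, haev_lin]
    have := hcomp L K' t hLK' i
    rw [← this]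
  have htbij : Function.Bijective ⇑(aeval t :
      MvPolynomial (Fin m) R₀ →ₐ[R₀] MvPolynomial (Fin m) R₀) := by
    rw [htcomp, AlgHom.coe_comp]
    exact hFbij.comp hψbij
  refine ⟨htbij, ?_⟩
  rw [Algebra.adjoin_range_eq_range_aeval]
  exact (AlgHom.range_eq_top _).mpr htbij.surjective
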